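/- The left cosets of finitely many subgroups H_1,...,H_N of a group G form a pre-basis of closed sets for a noetherian topology on G: there is no infinite strictly descending chain of finite unions of left cosets of intersections H_I = ⋂_{i∈I} H_i. -/

import Mathlib

open Pointwise

namespace NoethCosetAux

open scoped Classical

variable {G : Type*} [Group G] {N : ℕ}

noncomputable section

/-- The intersection subgroup attached to an index set. -/
def Kk (H : Fin N → Subgroup G) (I : Finset (Fin N)) : Subgroup G := ⨅ i ∈ I, H i

/-- The coset attached to a pair. -/
def cos (H : Fin N → Subgroup G) (p : G × Finset (Fin N)) : Set G :=
  p.1 • ((Kk H p.2 : Subgroup G) : Set G)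

/-- The closed set attached to a finite set of pairs. -/
def U (H : Fin N → Subgroup G) (s : Finset (G × Finset (Fin N))) : Set G :=
  ⋃ p ∈ s, cos H p

lemma Kk_union (H : Fin N → Subgroup G) (I J : Finset (Fin N)) :
    Kk H (I ∪ J) = Kk H I ⊓ Kk H J := Finset.iInf_union

lemma mem_own_cos (H : Fin N → Subgroup G) (p : G × Finset (Fin N)) : p.1 ∈ cos H p := by
  show p.1 ∈ p.1 • ((Kk H p.2 : Subgroup G) : Set G)
  rw [mem_leftCoset_iff]
  simp [one_mem]

lemma cos_inter (H : Fin N → Subgroup G) {p q : G × Finset (Fin N)} {x : G}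
    (hx : x ∈ cos H p ∩ cos H q) :
    cos H p ∩ cos H q = cos H (x, p.2 ∪ q.2) := by
  have h1 : cos H p = x • ((Kk H p.2 : Subgroup G) : Set G) :=
    (leftCoset_eq_iff _).2 ((mem_leftCoset_iff _).1 hx.1)
  have h2 : cos H q = x • ((Kk H q.2 : Subgroup G) : Set G) :=
    (leftCoset_eq_iff _).2 ((mem_leftCoset_iff _).1 hx.2)
  rw [h1, h2, ← Set.smul_set_inter]
  show x • (((Kk H p.2 : Subgroup G) : Set G) ∩ ((Kk H q.2 : Subgroup G) : Set G))
      = x • ((Kk H (p.2 ∪ q.2) : Subgroup G) : Set G)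
  rw [Kk_union, Subgroup.coe_inf]

lemma cos_eq_of_subset (H : Fin N → Subgroup G) {p q : G × Finset (Fin N)}
    (hK : Kk H p.2 = Kk H q.2) (hsub : cos H p ⊆ cos H q) : cos H p = cos H q := by
  have hx : p.1 ∈ cos H q := hsub (mem_own_cos H p)
  have hm : q.1⁻¹ * p.1 ∈ Kk H q.2 := (mem_leftCoset_iff _).1 hx
  show p.1 • ((Kk H p.2 : Subgroup G) : Set G) = q.1 • ((Kk H q.2 : Subgroup G) : Set G)
  rw [hK]
  exact ((leftCoset_eq_iff _).2 (by simpa using hm)).symm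

/-- Rank of an index set:  number of index sets with strictly smaller subgroup. -/
def rank (H : Fin N → Subgroup G) (I : Finset (Fin N)) : ℕ :=
  (Finset.univ.filter fun J : Finset (Fin N) => Kk H J < Kk H I).card

lemma rank_lt_rank (H : Fin N → Subgroup G) {I J : Finset (Fin N)}
    (h : Kk H I < Kk H J) : rank H I < rank H J := by
  apply Finset.card_lt_card
  have hsub : (Finset.univ.filter fun J' : Finset (Fin N) => Kk H J' < Kk H I) ⊆
      (Finset.univ.filter fun J' : Finset (Fin N) => Kk H J' < Kk H J) := by
    intro J' hJ'
    simp only [Finset.mem_filter, Finset.mem_univ, true_and] at *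
    exact lt_trans hJ' h
  rw [Finset.ssubset_iff_of_subset hsub]
  exact ⟨I, by simp [h], by simp⟩

lemma rank_lt (H : Fin N → Subgroup G) (I : Finset (Fin N)) : rank H I < 2 ^ N := by
  have h : (Finset.univ.filter fun J : Finset (Fin N) => Kk H J < Kk H I) ⊂ Finset.univ := by
    rw [Finset.filter_ssubset]
    exact ⟨I, Finset.mem_univ I, lt_irrefl _⟩
  have := Finset.card_lt_card h
  simpa [rank, Finset.card_univ, Fintype.card_finset] using this

/-- Measure of a representation: counts of cosets per rank, highest rank first. -/
def meas (H : Fin N → Subgroup G) (s : Finset (G × Finset (Fin N))) : Fin (2 ^ N) → ℕ :=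
  fun i => (s.filter fun p => rank H p.2 = 2 ^ N - 1 - i.1).card

/-- The lexicographic comparison of measures, highest rank first. -/
def mlt {N : ℕ} (a b : Fin (2 ^ N) → ℕ) : Prop :=
  Pi.Lex (· < ·) (fun {_} => (· < ·)) a b

lemma mlt_wf {N : ℕ} : WellFounded (@mlt N) := by
  have : WellFounded (Pi.Lex ((· < ·) : Fin (2 ^ N) → Fin (2 ^ N) → Prop)
      (fun {_} => ((· < ·) : ℕ → ℕ → Prop))) :=
    Pi.Lex.wellFounded _ (fun _ => wellFounded_lt)
  exact this

/-- Key descent lemma. -/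
lemma key (H : Fin N → Subgroup G) {f1 f2 : Set G} {s t : Finset (G × Finset (Fin N))}
    (hs : f1 = U H s) (ht : f2 = U H t) (hlt : f2 ⊂ f1) :
    ∃ s', f2 = U H s' ∧ mlt (meas H s') (meas H s) := by
  classical
  set T := s.filter (fun q => cos H q ⊆ f2) with hT
  have hTs : T ⊆ s := Finset.filter_subset _ _
  have h21 : ¬ f1 ⊆ f2 := fun h => hlt.ne (Set.Subset.antisymm hlt.subset h)
  have hne : (s \ T).Nonempty := by
    rw [Finset.sdiff_nonempty]
    intro hsub
    apply h21
    rw [hs]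
    intro x hx
    rw [U, Set.mem_iUnion₂] at hx
    obtain ⟨q, hq, hxq⟩ := hx
    have hqT := hsub hq
    rw [hT, Finset.mem_filter] at hqT
    exact hqT.2 hxq
  set c : (G × Finset (Fin N)) × (G × Finset (Fin N)) → G :=
    fun pq => if h : (cos H pq.1 ∩ cos H pq.2).Nonempty then h.choose else 1 with hc
  set Pp := ((t ×ˢ (s \ T)).filter fun pq => (cos H pq.1 ∩ cos H pq.2).Nonempty).image
      (fun pq => (c pq, pq.1.2 ∪ pq.2.2)) with hPp
  have piece_eq : ∀ pq : (G × Finset (Fin N)) × (G × Finset (Fin N)),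
      (cos H pq.1 ∩ cos H pq.2).Nonempty →
      cos H pq.1 ∩ cos H pq.2 = cos H (c pq, pq.1.2 ∪ pq.2.2) := by
    intro pq hpq
    have hx : c pq ∈ cos H pq.1 ∩ cos H pq.2 := by
      rw [hc]
      simp only [dif_pos hpq]
      exact hpq.choose_spec
    exact cos_inter H hx
  have hcover : f2 = U H (T ∪ Pp) := by
    apply Set.Subset.antisymm
    · intro x hx
      have hxt : x ∈ U H t := ht ▸ hx
      rw [U, Set.mem_iUnion₂] at hxt
      obtain ⟨p, hp, hxp⟩ := hxt
      have hx1 : x ∈ f1 := hlt.subset hx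
      rw [hs, U, Set.mem_iUnion₂] at hx1
      obtain ⟨q, hq, hxq⟩ := hx1
      rw [U, Set.mem_iUnion₂]
      by_cases hqT : q ∈ T
      · exact ⟨q, Finset.mem_union_left _ hqT, hxq⟩
      · have hmem : (p, q) ∈ (t ×ˢ (s \ T)).filter
            (fun pq => (cos H pq.1 ∩ cos H pq.2).Nonempty) := by
          rw [Finset.mem_filter, Finset.mem_product]
          exact ⟨⟨hp, Finset.mem_sdiff.2 ⟨hq, hqT⟩⟩, ⟨x, hxp, hxq⟩⟩
        refine ⟨(c (p, q), p.2 ∪ q.2), Finset.mem_union_right _ ?_, ?_⟩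
        · rw [hPp]
          exact Finset.mem_image.2 ⟨(p, q), hmem, rfl⟩
        · have := piece_eq (p, q) ⟨x, hxp, hxq⟩
          exact this ▸ (⟨hxp, hxq⟩ : x ∈ cos H p ∩ cos H q)
    · intro x hx
      rw [U, Set.mem_iUnion₂] at hx
      obtain ⟨r, hr, hxr⟩ := hx
      rcases Finset.mem_union.1 hr with h | h
      · exact (Finset.mem_filter.1 h).2 hxr
      · rw [hPp] at h
        obtain ⟨pq, hpq, rfl⟩ := Finset.mem_image.1 h
        have hpq' := Finset.mem_filter.1 hpq
        rw [← piece_eq pq hpq'.2] at hxr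
        have hpt : pq.1 ∈ t := (Finset.mem_product.1 hpq'.1).1
        rw [ht, U, Set.mem_iUnion₂]
        exact ⟨pq.1, hpt, hxr.1⟩
  have piece_rank : ∀ pq ∈ (t ×ˢ (s \ T)).filter
      (fun pq => (cos H pq.1 ∩ cos H pq.2).Nonempty),
      rank H (pq.1.2 ∪ pq.2.2) < rank H pq.2.2 := by
    intro pq hpq
    rw [Finset.mem_filter] at hpq
    obtain ⟨hmem, hne'⟩ := hpq
    rw [Finset.mem_product] at hmem
    apply rank_lt_rank
    have hle : Kk H (pq.1.2 ∪ pq.2.2) ≤ Kk H pq.2.2 := by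
      rw [Kk_union]; exact inf_le_right
    refine lt_of_le_of_ne hle (fun heq => ?_)
    have hsub : cos H (c pq, pq.1.2 ∪ pq.2.2) ⊆ cos H pq.2 := by
      rw [← piece_eq pq hne']
      exact Set.inter_subset_right
    have heqc : cos H (c pq, pq.1.2 ∪ pq.2.2) = cos H pq.2 := cos_eq_of_subset H heq hsub
    have hq2 : pq.2 ∈ s \ T := hmem.2
    have hcs : cos H pq.2 ⊆ f2 := by
      rw [← heqc, ← piece_eq pq hne']
      intro y hy
      rw [ht, U, Set.mem_iUnion₂]
      exact ⟨pq.1, hmem.1, hy.1⟩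
    have : pq.2 ∈ T := by
      rw [hT, Finset.mem_filter]
      exact ⟨(Finset.mem_sdiff.1 hq2).1, hcs⟩
    exact (Finset.mem_sdiff.1 hq2).2 this
  set R := (s \ T).image (fun q => rank H q.2) with hR
  have hRne : R.Nonempty := hne.image _
  set rh := R.max' hRne with hrh
  have hq0' : rh ∈ R := Finset.max'_mem R hRne
  have hle_rh : ∀ q ∈ s \ T, rank H q.2 ≤ rh := by
    intro q hq
    exact Finset.le_max' R _ (by rw [hR]; exact Finset.mem_image_of_mem _ hq)
  obtain ⟨q0, hq0, hq0r⟩ : ∃ q0, q0 ∈ s \ T ∧ rh = rank H q0.2 := by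
    rw [hR] at hq0'
    obtain ⟨q0, hq0, h⟩ := Finset.mem_image.1 hq0'
    exact ⟨q0, hq0, h.symm⟩
  have hPrank : ∀ x ∈ Pp, rank H x.2 < rh := by
    intro x hx
    rw [hPp] at hx
    obtain ⟨pq, hpq, rfl⟩ := Finset.mem_image.1 hx
    have h1 := piece_rank pq hpq
    rw [Finset.mem_filter, Finset.mem_product] at hpq
    show rank H (pq.1.2 ∪ pq.2.2) < rh
    exact lt_of_lt_of_le h1 (hle_rh pq.2 hpq.1.2)
  have hcount : ∀ r : ℕ, rh ≤ r →
      ((T ∪ Pp).filter fun p => rank H p.2 = r) = (T.filter fun p => rank H p.2 = r) := by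
    intro r hr
    have hPempty : (Pp.filter fun p => rank H p.2 = r) = ∅ := by
      rw [Finset.filter_eq_empty_iff]
      intro x hx hr'
      have := hPrank x hx
      omega
    rw [Finset.filter_union, hPempty, Finset.union_empty]
  have hcount_s : ∀ r : ℕ, rh < r →
      (s.filter fun p => rank H p.2 = r) = (T.filter fun p => rank H p.2 = r) := by
    intro r hr
    ext x
    simp only [Finset.mem_filter]
    constructor
    · rintro ⟨hxs, hxr⟩
      refine ⟨?_, hxr⟩
      by_contra hxT
      have hmem : x ∈ s \ T := Finset.mem_sdiff.2 ⟨hxs, hxT⟩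
      have := hle_rh x hmem
      omega
    · rintro ⟨hxT, hxr⟩
      exact ⟨hTs hxT, hxr⟩
  have hrhlt : rh < 2 ^ N := by
    rw [hq0r]
    exact rank_lt H q0.2
  refine ⟨T ∪ Pp, hcover, ?_⟩
  show Pi.Lex _ _ _ _
  refine ⟨⟨2 ^ N - 1 - rh, by omega⟩, ?_, ?_⟩
  · intro j hj
    have hj' : (j : ℕ) < 2 ^ N - 1 - rh := hj
    have hgt : rh < 2 ^ N - 1 - (j : ℕ) := by omega
    show ((T ∪ Pp).filter fun p => rank H p.2 = 2 ^ N - 1 - (j : ℕ)).card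
        = (s.filter fun p => rank H p.2 = 2 ^ N - 1 - (j : ℕ)).card
    rw [hcount _ (le_of_lt hgt), hcount_s _ hgt]
  · show ((T ∪ Pp).filter fun p => rank H p.2 = 2 ^ N - 1 - (2 ^ N - 1 - rh)).card
        < (s.filter fun p => rank H p.2 = 2 ^ N - 1 - (2 ^ N - 1 - rh)).card
    have heq : 2 ^ N - 1 - (2 ^ N - 1 - rh) = rh := by omega
    rw [heq, hcount rh le_rfl]
    apply Finset.card_lt_card
    rw [Finset.ssubset_iff_of_subset (Finset.filter_subset_filter _ hTs)]
    refine ⟨q0, ?_, ?_⟩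
    · exact Finset.mem_filter.2 ⟨(Finset.mem_sdiff.1 hq0).1, hq0r.symm⟩
    · intro hq0T
      exact (Finset.mem_sdiff.1 hq0).2 (Finset.mem_filter.1 hq0T).1

end

end NoethCosetAux

/-- The left cosets of finitely many subgroups `H 1, ..., H N` of a group `G` form a
pre-basis of closed sets for a noetherian topology on `G`: there is no infinite
strictly descending chain of finite unions of left cosets of the intersections
`H_I = ⋂ i ∈ I, H i`. -/
theorem noetherian_coset_topology {G : Type*} [Group G] {N : ℕ} (H : Fin N → Subgroup G) :
    ¬ ∃ f : ℕ → Set G,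
      (∀ k : ℕ, ∃ s : Finset (G × Finset (Fin N)),
        f k = ⋃ p ∈ s, p.1 • ((⨅ i ∈ p.2, H i : Subgroup G) : Set G)) ∧
      (∀ k : ℕ, f (k + 1) ⊂ f k) := by
  rintro ⟨f, hrep, hdesc⟩
  classical
  have hrep' : ∀ k, ∃ s : Finset (G × Finset (Fin N)), f k = NoethCosetAux.U H s := by
    intro k
    obtain ⟨s, hs⟩ := hrep k
    exact ⟨s, hs⟩
  let Q : ℕ → Type _ := fun k => {s : Finset (G × Finset (Fin N)) // f k = NoethCosetAux.U H s}
  have hstep : ∀ k (sk : Q k), ∃ s', f (k + 1) = NoethCosetAux.U H s' ∧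
      NoethCosetAux.mlt (NoethCosetAux.meas H s') (NoethCosetAux.meas H sk.1) := by
    intro k sk
    obtain ⟨t, htt⟩ := hrep' (k + 1)
    exact NoethCosetAux.key H sk.2 htt (hdesc k)
  let σ : ∀ k, Q k := fun k => Nat.rec ⟨(hrep' 0).choose, (hrep' 0).choose_spec⟩
      (fun k ih => ⟨(hstep k ih).choose, (hstep k ih).choose_spec.1⟩) k
  have hdec : ∀ k, NoethCosetAux.mlt (NoethCosetAux.meas H (σ (k + 1)).1)
      (NoethCosetAux.meas H (σ k).1) :=
    fun k => (hstep k (σ k)).choose_spec.2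
  have wf : WellFounded (@NoethCosetAux.mlt N) := NoethCosetAux.mlt_wf
  obtain ⟨a, ha, hmin⟩ := wf.has_min
    (Set.range fun k => NoethCosetAux.meas H (σ k).1) ⟨_, 0, rfl⟩
  obtain ⟨n, rfl⟩ := ha
  exact hmin _ ⟨n + 1, rfl⟩ (hdec n)
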